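/- Let k, m ≥ 1, Q ∈ ℝ^{k×k} symmetric with columns Q₁,…,Q_k, d ∈ ℝ^k, F ∈ ℝ^{k×m}, w ∈ ℝ^m, and τ, θ ∈ ℝ^k with θ_i > 0 for all i. Suppose the set R_τ := {y ∈ ℝ^k : Fᵀy ≤ w, τᵀy ≥ 1, y ≥ 0} is nonempty, and let β ∈ ℝ be such that for every index i ∈ {1,…,k} and every y ∈ R_τ, (θ_i^{−1} Q_i + d)ᵀ y + θ_i^{−1} d_i ≤ β. Then there exist Λ₀ ∈ ℝ^k with Λ₀ ≥ 0 and Λ ∈ ℝ^{k×m} with all entries nonnegative such that, entrywise, Q ≤ −Λ₀τᵀ − τΛ₀ᵀ + ΛFᵀ + FΛᵀ − (1/2)(dθᵀ + θdᵀ), and, componentwise, d ≤ βθ + 2Λ₀ − 2Λw. (This is the lemma relating Konno's bound φ̄ᴷ_{τ,θ} to the LP relaxation: it shows the minimum of the LP in (prob:konnoQP) is at most φ̄ᴷ_{τ,θ}.) -/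

import Mathlib

open Matrix

noncomputable section

open Finset
open scoped RealInnerProductSpace



section Cara
variable {ι : Type*} [Fintype ι] [DecidableEq ι]
variable {V : Type*} [AddCommGroup V] [Module ℝ V]

lemma sum_extend (g : ι → V) (t : Finset ι) (e : {x // x ∈ t} → ℝ) :
    ∑ i ∈ t, (if h : i ∈ t then e ⟨i, h⟩ else 0) • g i = ∑ i : {x // x ∈ t}, e i • g (i : ι) := by
  rw [← Finset.sum_attach t (fun i => (if h : i ∈ t then e ⟨i, h⟩ else 0) • g i),
    Finset.univ_eq_attach]
  exact Finset.sum_congr rfl fun x _ => by simp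

lemma cone_caratheodory (g : ι → V) (t : Finset ι) (μ : ι → ℝ) (hμ : ∀ i, 0 ≤ μ i) :
    ∃ s : Finset ι, s ⊆ t ∧ LinearIndependent ℝ (fun i : s => g (i : ι)) ∧
      ∃ ν : ι → ℝ, (∀ i, 0 ≤ ν i) ∧ ∑ i ∈ s, ν i • g i = ∑ i ∈ t, μ i • g i := by
  classical
  induction t using Finset.strongInduction generalizing μ with
  | _ t ih =>
  by_cases hli : LinearIndependent ℝ (fun i : t => g (i : ι))
  · exact ⟨t, Finset.Subset.refl t, hli, μ, hμ, rfl⟩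
  · rw [Fintype.not_linearIndependent_iff] at hli
    obtain ⟨c, hc0, i₁, hi₁⟩ := hli
    obtain ⟨D, hD0, j₁, hj₁t, hj₁⟩ :
        ∃ D : ι → ℝ, (∑ i ∈ t, D i • g i = 0) ∧ ∃ j ∈ t, 0 < D j := by
      rcases lt_trichotomy (c i₁) 0 with hsign | hsign | hsign
      · refine ⟨fun i => if h : i ∈ t then -c ⟨i, h⟩ else 0, ?_, i₁, i₁.2, ?_⟩
        · rw [sum_extend g t (fun x => -c x)]
          simp only [neg_smul, Finset.sum_neg_distrib, hc0, neg_zero]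
        · simp only [dif_pos i₁.2, Subtype.coe_eta]; linarith
      · exact absurd hsign hi₁
      · refine ⟨fun i => if h : i ∈ t then c ⟨i, h⟩ else 0, ?_, i₁, i₁.2, ?_⟩
        · rw [sum_extend g t c]; exact hc0
        · simp only [dif_pos i₁.2, Subtype.coe_eta]; exact hsign
    set P := t.filter (fun i => 0 < D i) with hP
    have hPne : P.Nonempty := ⟨j₁, by simp [hP, hj₁t, hj₁]⟩
    obtain ⟨i₀, hi₀P, hmin⟩ := P.exists_min_image (fun i => μ i / D i) hPne
    have hi₀t : i₀ ∈ t := (Finset.mem_filter.mp hi₀P).1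
    have hDi₀ : 0 < D i₀ := (Finset.mem_filter.mp hi₀P).2
    set r := μ i₀ / D i₀ with hr
    have hr0 : 0 ≤ r := div_nonneg (hμ i₀) hDi₀.le
    set ν : ι → ℝ := fun i => if i ∈ t then μ i - r * D i else 0 with hν
    have hν0 : ∀ i, 0 ≤ ν i := by
      intro i
      simp only [hν]
      split_ifs with hit
      · by_cases hDi : 0 < D i
        · have := hmin i (Finset.mem_filter.mpr ⟨hit, hDi⟩)
          rw [le_div_iff₀ hDi] at this
          linarith
        · push_neg at hDi
          nlinarith [hμ i, mul_nonneg hr0 (neg_nonneg.mpr hDi)]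
      · exact le_refl 0
    have hνi₀ : ν i₀ = 0 := by
      simp only [hν, if_pos hi₀t, hr]
      rw [div_mul_cancel₀ _ hDi₀.ne']
      ring
    have hsum : ∑ i ∈ t, ν i • g i = ∑ i ∈ t, μ i • g i := by
      have : ∀ i ∈ t, ν i • g i = μ i • g i - r • (D i • g i) := by
        intro i hit
        simp only [hν, if_pos hit, sub_smul, smul_smul]
      rw [Finset.sum_congr rfl this, Finset.sum_sub_distrib, ← Finset.smul_sum, hD0,
        smul_zero, sub_zero]
    have herase : ∑ i ∈ t.erase i₀, ν i • g i = ∑ i ∈ t, ν i • g i :=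
      Finset.sum_erase t (by rw [hνi₀, zero_smul])
    obtain ⟨s, hs, hliS, ν', hν'0, hsum'⟩ :=
      ih (t.erase i₀) (Finset.erase_ssubset hi₀t) ν hν0
    exact ⟨s, hs.trans (Finset.erase_subset _ _), hliS, ν', hν'0, by
      rw [hsum', herase, hsum]⟩
end Cara

section Closed
variable {ι : Type*} [Fintype ι] [DecidableEq ι]
variable {H : Type*} [NormedAddCommGroup H] [InnerProductSpace ℝ H] [FiniteDimensional ℝ H]

lemma isClosed_cone_li (g : ι → H) (t : Finset ι)
    (hli : LinearIndependent ℝ (fun i : t => g (i : ι))) :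
    IsClosed {x : H | ∃ μ : ι → ℝ, (∀ i, 0 ≤ μ i) ∧ x = ∑ i ∈ t, μ i • g i} := by
  classical
  let L : ({x // x ∈ t} → ℝ) →ₗ[ℝ] H :=
    { toFun := fun μ => ∑ i : {x // x ∈ t}, μ i • g (i : ι)
      map_add' := fun f h => by simp [add_smul, Finset.sum_add_distrib]
      map_smul' := fun r f => by simp [smul_smul, Finset.smul_sum]
      }
  have hker : LinearMap.ker L = ⊥ := by
    rw [LinearMap.ker_eq_bot']
    intro μ hμ
    have := Fintype.linearIndependent_iff.mp hli μ hμ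
    funext i; exact this i
  have himg : {x : H | ∃ μ : ι → ℝ, (∀ i, 0 ≤ μ i) ∧ x = ∑ i ∈ t, μ i • g i}
      = L '' {μ : {x // x ∈ t} → ℝ | ∀ i, 0 ≤ μ i} := by
    ext x
    constructor
    · rintro ⟨μ, hμ, rfl⟩
      refine ⟨fun i => μ i, fun i => hμ i, ?_⟩
      show ∑ i : {x // x ∈ t}, μ (i : ι) • g (i : ι) = _
      rw [Finset.univ_eq_attach, Finset.sum_attach t (fun i => μ i • g i)]
    · rintro ⟨e, he, rfl⟩
      refine ⟨fun i => if h : i ∈ t then e ⟨i, h⟩ else 0, fun i => ?_, ?_⟩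
      · dsimp only
        split_ifs with h
        · exact he _
        · exact le_refl 0
      · show L e = _
        rw [sum_extend g t e]
        rfl
  rw [himg]
  have hclosed : IsClosed {μ : {x // x ∈ t} → ℝ | ∀ i, 0 ≤ μ i} := by
    have : {μ : {x // x ∈ t} → ℝ | ∀ i, 0 ≤ μ i} = ⋂ i, {μ | 0 ≤ μ i} := by
      ext; simp [Set.mem_iInter]
    rw [this]
    exact isClosed_iInter fun i => isClosed_le continuous_const (continuous_apply i)
  exact (LinearMap.isClosedEmbedding_of_injective hker).isClosedMap _ hclosed

lemma isClosed_cone (g : ι → H) :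
    IsClosed {x : H | ∃ μ : ι → ℝ, (∀ i, 0 ≤ μ i) ∧ x = ∑ i, μ i • g i} := by
  classical
  have : {x : H | ∃ μ : ι → ℝ, (∀ i, 0 ≤ μ i) ∧ x = ∑ i, μ i • g i}
      = ⋃ (t : Finset ι), ⋃ (_ : LinearIndependent ℝ (fun i : t => g (i : ι))),
          {x : H | ∃ μ : ι → ℝ, (∀ i, 0 ≤ μ i) ∧ x = ∑ i ∈ t, μ i • g i} := by
    ext x
    simp only [Set.mem_iUnion, Set.mem_setOf_eq]
    constructor
    · rintro ⟨μ, hμ, rfl⟩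
      obtain ⟨s, _, hliS, ν, hν0, hsum⟩ := cone_caratheodory g Finset.univ μ hμ
      exact ⟨s, hliS, ν, hν0, hsum.symm⟩
    · rintro ⟨t, hli, μ, hμ, rfl⟩
      refine ⟨fun i => if i ∈ t then μ i else 0, fun i => by dsimp only; split_ifs; exacts [hμ i, le_refl 0], ?_⟩
      rw [← Finset.sum_filter_add_sum_filter_not Finset.univ (· ∈ t)]
      have h1 : ∀ i ∈ Finset.univ.filter (· ∈ t), (if i ∈ t then μ i else 0) • g i = μ i • g i := by
        intro i hi; simp_all
      have h2 : ∀ i ∈ Finset.univ.filter (¬ · ∈ t), (if i ∈ t then μ i else 0) • g i = 0 := by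
        intro i hi; simp_all
      rw [Finset.sum_congr rfl h1, Finset.sum_congr rfl h2, Finset.sum_const_zero, add_zero]
      congr 1
      ext i; simp
  rw [this]
  exact isClosed_iUnion_of_finite fun t =>
    isClosed_iUnion_of_finite fun hli => isClosed_cone_li g t hli
end Closed

lemma farkas_lp {k m : ℕ} (F : Matrix (Fin k) (Fin m) ℝ) (w : Fin m → ℝ) (τ : Fin k → ℝ)
    (hne : ∃ y : Fin k → ℝ, (∀ j, Fᵀ.mulVec y j ≤ w j) ∧ 1 ≤ τ ⬝ᵥ y ∧ (∀ a, 0 ≤ y a))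
    (c : Fin k → ℝ) (γ : ℝ)
    (hb : ∀ y : Fin k → ℝ, (∀ j, Fᵀ.mulVec y j ≤ w j) → 1 ≤ τ ⬝ᵥ y → (∀ a, 0 ≤ y a) →
      c ⬝ᵥ y ≤ γ) :
    ∃ (lam : Fin m → ℝ) (lam0 : ℝ), (∀ j, 0 ≤ lam j) ∧ 0 ≤ lam0 ∧
      (∀ a, c a ≤ F.mulVec lam a - lam0 * τ a) ∧ w ⬝ᵥ lam - lam0 ≤ γ := by
  classical
  let pair : (Fin k → ℝ) → ℝ → EuclideanSpace ℝ (Fin k ⊕ Unit) :=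
    fun v r => WithLp.toLp 2 (fun p => Sum.elim v (fun _ => r) p)
  let G : (Fin m ⊕ Fin k) ⊕ Bool → EuclideanSpace ℝ (Fin k ⊕ Unit) := fun i' =>
    Sum.elim (Sum.elim (fun j => pair (fun a => F a j) (w j))
                       (fun a₀ => pair (fun a' => if a' = a₀ then (-1:ℝ) else 0) 0))
             (fun s => if s then pair (fun a => -τ a) (-1) else pair 0 1) i'
  set C : Set (EuclideanSpace ℝ (Fin k ⊕ Unit)) :=
    {x | ∃ μ : (Fin m ⊕ Fin k) ⊕ Bool → ℝ, (∀ i, 0 ≤ μ i) ∧ x = ∑ i, μ i • G i} with hC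
  let K : ConvexCone ℝ (EuclideanSpace ℝ (Fin k ⊕ Unit)) :=
    { carrier := C
      smul_mem' := by
        rintro r hr x ⟨μ, hμ, rfl⟩
        exact ⟨fun i => r * μ i, fun i => mul_nonneg hr.le (hμ i), by
          rw [Finset.smul_sum]; exact Finset.sum_congr rfl fun i _ => by
            dsimp only; rw [smul_smul]⟩
      add_mem' := by
        rintro x ⟨μ, hμ, rfl⟩ y ⟨ν, hν, rfl⟩
        exact ⟨fun i => μ i + ν i, fun i => add_nonneg (hμ i) (hν i), by
          rw [← Finset.sum_add_distrib]
          exact Finset.sum_congr rfl fun i _ => (add_smul (μ i) (ν i) (G i)).symm⟩ }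
  have hG : ∀ i, G i ∈ C := by
    intro i
    refine ⟨fun i' => if i' = i then 1 else 0, fun i' => by dsimp only; split_ifs <;> norm_num, ?_⟩
    simp [ite_smul]
  have hip : ∀ (v : Fin k → ℝ) (r : ℝ) (z : EuclideanSpace ℝ (Fin k ⊕ Unit)),
      ⟪pair v r, z⟫ = ∑ a, v a * z (Sum.inl a) + r * z (Sum.inr ()) := by
    intro v r z
    simp [pair, PiLp.inner_apply, RCLike.inner_apply, conj_trivial, Fintype.sum_sum_type, mul_comm]
  have hbC : pair c γ ∈ C := by
    by_contra hnot
    obtain ⟨z, hz1, hz2⟩ :=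
      (show ∃ y, (∀ x ∈ K, 0 ≤ ⟪x, y⟫) ∧ ⟪y, pair c γ⟫ < 0 from by
        obtain ⟨y, hy1, hy2⟩ := ProperCone.hyperplane_separation' (x₀ := pair c γ)
          ({ toSubmodule := K.toPointedCone ⟨fun _ => 0, fun _ => le_refl 0, by simp⟩,
             isClosed' := isClosed_cone G } : ProperCone ℝ _) hnot
        exact ⟨y, fun x hx => hy1 x hx, by rw [real_inner_comm]; exact hy2⟩)
    set u : Fin k → ℝ := fun a => -(z (Sum.inl a)) with hu
    set t0 : ℝ := z (Sum.inr ()) with ht0def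
    have h1 : ∀ j, Fᵀ.mulVec u j ≤ w j * t0 := by
      intro j
      have h := hz1 _ (hG (Sum.inl (Sum.inl j)))
      rw [show G (Sum.inl (Sum.inl j)) = pair (fun a => F a j) (w j) from rfl, hip] at h
      have e1 : Fᵀ.mulVec u j = -∑ a, F a j * z (Sum.inl a) := by
        simp [Matrix.mulVec, dotProduct, hu, mul_neg, Finset.sum_neg_distrib]
      rw [e1]; linarith
    have h2 : ∀ a, 0 ≤ u a := by
      intro a
      have h := hz1 _ (hG (Sum.inl (Sum.inr a)))
      rw [show G (Sum.inl (Sum.inr a)) = pair (fun a' => if a' = a then (-1:ℝ) else 0) 0 from rfl,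
        hip] at h
      simp only [ite_mul, neg_mul, one_mul, zero_mul, Finset.sum_ite_eq, Finset.mem_univ,
        if_true, zero_mul, add_zero] at h
      simpa [hu] using h
    have h3 : t0 ≤ τ ⬝ᵥ u := by
      have h := hz1 _ (hG (Sum.inr true))
      rw [show G (Sum.inr true) = pair (fun a => -τ a) (-1) from rfl, hip] at h
      have e1 : τ ⬝ᵥ u = ∑ a, -τ a * z (Sum.inl a) := by
        simp [dotProduct, hu, mul_neg, Finset.sum_neg_distrib]
      rw [e1]; linarith
    have h4 : 0 ≤ t0 := by
      have h := hz1 _ (hG (Sum.inr false))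
      rw [show G (Sum.inr false) = pair 0 1 from rfl, hip] at h
      simpa using h
    have h5 : γ * t0 < c ⬝ᵥ u := by
      rw [real_inner_comm] at hz2
      rw [hip] at hz2
      have e1 : c ⬝ᵥ u = -∑ a, c a * z (Sum.inl a) := by
        simp [dotProduct, hu, mul_neg, Finset.sum_neg_distrib]
      rw [e1]; linarith
    rcases eq_or_lt_of_le h4 with ht0 | ht0
    · -- t0 = 0 : recession direction
      obtain ⟨y₀, hy₀F, hy₀τ, hy₀pos⟩ := hne
      have hcu : 0 < c ⬝ᵥ u := by rw [← ht0] at h5; simpa using h5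
      set s : ℝ := max 0 ((γ - c ⬝ᵥ y₀ + 1) / (c ⬝ᵥ u)) with hs
      have hs0 : 0 ≤ s := le_max_left _ _
      have hkey : γ < c ⬝ᵥ y₀ + s * (c ⬝ᵥ u) := by
        rcases le_or_gt ((γ - c ⬝ᵥ y₀ + 1) / (c ⬝ᵥ u)) 0 with hd | hd
        · have hnum : γ - c ⬝ᵥ y₀ + 1 ≤ 0 := by
            rcases div_nonpos_iff.mp hd with ⟨h₁, h₂⟩ | ⟨h₁, h₂⟩
            · linarith
            · exact h₁
          nlinarith [mul_nonneg hs0 hcu.le]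
        · have hsd : s = (γ - c ⬝ᵥ y₀ + 1) / (c ⬝ᵥ u) := max_eq_right hd.le
          rw [hsd, div_mul_cancel₀ _ hcu.ne']
          linarith
      have hfeas1 : ∀ j, Fᵀ.mulVec (y₀ + s • u) j ≤ w j := by
        intro j
        rw [Matrix.mulVec_add, Matrix.mulVec_smul]
        have := h1 j
        rw [← ht0] at this
        have : s * Fᵀ.mulVec u j ≤ 0 := by
          apply mul_nonpos_of_nonneg_of_nonpos hs0; linarith
        have hF := hy₀F j
        simp only [Pi.add_apply, Pi.smul_apply, smul_eq_mul]
        linarith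
      have hfeas2 : 1 ≤ τ ⬝ᵥ (y₀ + s • u) := by
        rw [dotProduct_add, dotProduct_smul]
        have : 0 ≤ τ ⬝ᵥ u := by rw [← ht0] at h3; linarith
        have : 0 ≤ s * (τ ⬝ᵥ u) := mul_nonneg hs0 this
        simp only [smul_eq_mul]
        linarith
      have hfeas3 : ∀ a, 0 ≤ (y₀ + s • u) a := fun a =>
        add_nonneg (hy₀pos a) (mul_nonneg hs0 (h2 a))
      have := hb _ hfeas1 hfeas2 hfeas3
      rw [dotProduct_add, dotProduct_smul, smul_eq_mul] at this
      linarith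
    · -- t0 > 0 : feasible point contradiction
      have ht0' : t0 ≠ 0 := ht0.ne'
      have hfeas1 : ∀ j, Fᵀ.mulVec (t0⁻¹ • u) j ≤ w j := by
        intro j
        rw [Matrix.mulVec_smul]
        simp only [Pi.smul_apply, smul_eq_mul]
        rw [inv_mul_le_iff₀ ht0]
        calc Fᵀ.mulVec u j ≤ w j * t0 := h1 j
          _ = t0 * w j := mul_comm _ _
      have hfeas2 : 1 ≤ τ ⬝ᵥ (t0⁻¹ • u) := by
        rw [dotProduct_smul, smul_eq_mul, le_inv_mul_iff₀ ht0, mul_one]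
        exact h3
      have hfeas3 : ∀ a, 0 ≤ (t0⁻¹ • u) a := fun a =>
        mul_nonneg (inv_nonneg.mpr h4) (h2 a)
      have hcontra := hb _ hfeas1 hfeas2 hfeas3
      rw [dotProduct_smul, smul_eq_mul] at hcontra
      rw [inv_mul_le_iff₀ ht0] at hcontra
      nlinarith
  -- extract multipliers
  obtain ⟨μ, hμ0, hμsum⟩ := hbC
  have hcoord : ∀ p, pair c γ p = ∑ i, μ i * G i p := by
    intro p
    rw [hμsum]
    simp [WithLp.ofLp_sum, Finset.sum_apply]
  refine ⟨fun j => μ (Sum.inl (Sum.inl j)), μ (Sum.inr true),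
    fun j => hμ0 _, hμ0 _, ?_, ?_⟩
  · intro a
    have h := hcoord (Sum.inl a)
    have hL : pair c γ (Sum.inl a) = c a := rfl
    rw [hL, Fintype.sum_sum_type, Fintype.sum_sum_type, Fintype.sum_bool] at h
    have e1 : ∀ j, G (Sum.inl (Sum.inl j)) (Sum.inl a) = F a j := fun j => rfl
    have e2 : ∀ a₀, G (Sum.inl (Sum.inr a₀)) (Sum.inl a) = if a = a₀ then -1 else 0 :=
      fun a₀ => rfl
    have e3 : G (Sum.inr true) (Sum.inl a) = -τ a := rfl
    have e4 : G (Sum.inr false) (Sum.inl a) = 0 := rfl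
    simp only [e1, e2, e3, e4, mul_ite, mul_neg, mul_one, mul_zero, add_zero] at h
    rw [Finset.sum_ite_eq] at h
    simp only [Finset.mem_univ, if_true] at h
    have e6 : F.mulVec (fun j => μ (Sum.inl (Sum.inl j))) a
        = ∑ j, μ (Sum.inl (Sum.inl j)) * F a j := by
      simp [Matrix.mulVec, dotProduct, mul_comm]
    rw [e6]
    have hy := hμ0 (Sum.inl (Sum.inr a))
    linarith
  · have h := hcoord (Sum.inr ())
    have hL : pair c γ (Sum.inr ()) = γ := rfl
    rw [hL, Fintype.sum_sum_type, Fintype.sum_sum_type, Fintype.sum_bool] at h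
    have e1 : ∀ j, G (Sum.inl (Sum.inl j)) (Sum.inr ()) = w j := fun j => rfl
    have e2 : ∀ a₀, G (Sum.inl (Sum.inr a₀)) (Sum.inr ()) = 0 := fun a₀ => rfl
    have e3 : G (Sum.inr true) (Sum.inr ()) = -1 := rfl
    have e4 : G (Sum.inr false) (Sum.inr ()) = 1 := rfl
    simp only [e1, e2, e3, e4, mul_zero, mul_one, mul_neg, Finset.sum_const_zero, add_zero,
      zero_add] at h
    have e6 : w ⬝ᵥ (fun j => μ (Sum.inl (Sum.inl j))) = ∑ j, μ (Sum.inl (Sum.inl j)) * w j := by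
      simp [dotProduct, mul_comm]
    rw [e6]
    have hf := hμ0 (Sum.inr false)
    linarith

/-- Farkas-type lemma relating Konno's bound to the LP relaxation. -/
theorem konno_bound_lp_relaxation {k m : ℕ} (hk : 1 ≤ k) (hm : 1 ≤ m)
    (Q : Matrix (Fin k) (Fin k) ℝ) (hQ : Q.IsSymm) (d : Fin k → ℝ)
    (F : Matrix (Fin k) (Fin m) ℝ) (w : Fin m → ℝ)
    (τ θ : Fin k → ℝ) (hθ : ∀ i, 0 < θ i)
    (hne : ∃ y : Fin k → ℝ, (∀ i, Fᵀ.mulVec y i ≤ w i) ∧ 1 ≤ τ ⬝ᵥ y ∧ (∀ i, 0 ≤ y i))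
    (β : ℝ)
    (hβ : ∀ i : Fin k, ∀ y : Fin k → ℝ,
      (∀ j, Fᵀ.mulVec y j ≤ w j) → 1 ≤ τ ⬝ᵥ y → (∀ j, 0 ≤ y j) →
      (fun a => (θ i)⁻¹ * Q a i + d a) ⬝ᵥ y + (θ i)⁻¹ * d i ≤ β) :
    ∃ (Λ₀ : Fin k → ℝ) (Λ : Matrix (Fin k) (Fin m) ℝ),
      (∀ a, 0 ≤ Λ₀ a) ∧ (∀ a b, 0 ≤ Λ a b) ∧
      (∀ a b, Q a b ≤
        (-vecMulVec Λ₀ τ - vecMulVec τ Λ₀ + Λ * Fᵀ + F * Λᵀ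
          - (1 / 2 : ℝ) • (vecMulVec d θ + vecMulVec θ d)) a b) ∧
      (∀ a, d a ≤ β * θ a + 2 * Λ₀ a - 2 * Λ.mulVec w a) := by
  have hfar : ∀ i : Fin k, ∃ (lam : Fin m → ℝ) (lam0 : ℝ),
      (∀ j, 0 ≤ lam j) ∧ 0 ≤ lam0 ∧
      (∀ a, (θ i)⁻¹ * Q a i + d a ≤ F.mulVec lam a - lam0 * τ a) ∧
      w ⬝ᵥ lam - lam0 ≤ β - (θ i)⁻¹ * d i := by
    intro i
    apply farkas_lp F w τ hne
    intro y h1 h2 h3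
    have := hβ i y h1 h2 h3
    linarith
  choose lam lam0 hlam hlam0 hA hB using hfar
  set Λ₀ : Fin k → ℝ := fun i => θ i * lam0 i / 2 with hΛ₀def
  set Λ : Matrix (Fin k) (Fin m) ℝ := Matrix.of fun i j => θ i * lam i j / 2 with hΛdef
  have hΛ₀pos : ∀ a, 0 ≤ Λ₀ a := fun a => by
    have := hθ a; have := hlam0 a; simp only [hΛ₀def]; positivity
  have hΛpos : ∀ a b, 0 ≤ Λ a b := fun a b => by
    have := hθ a; have := hlam a b; simp only [hΛdef, Matrix.of_apply]; positivity
  -- scaled version of hA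
  have hscaled : ∀ i a, Q a i ≤ θ i * F.mulVec (lam i) a - θ i * lam0 i * τ a - θ i * d a := by
    intro i a
    have h := mul_le_mul_of_nonneg_left (hA i a) (hθ i).le
    have hinv : θ i * (θ i)⁻¹ = 1 := mul_inv_cancel₀ (hθ i).ne'
    rw [mul_add, ← mul_assoc, hinv, one_mul, mul_sub, ← mul_assoc] at h
    linarith
  refine ⟨Λ₀, Λ, hΛ₀pos, hΛpos, ?_, ?_⟩
  · intro a b
    have hab := hscaled b a
    have hba := hscaled a b
    have hsym : Q b a = Q a b := hQ.apply a b
    simp only [Matrix.sub_apply, Matrix.add_apply, Matrix.neg_apply, Matrix.vecMulVec_apply,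
      Matrix.mul_apply, Matrix.smul_apply, smul_eq_mul, Matrix.transpose_apply]
    have e1 : ∑ j, Λ a j * F b j = θ a * F.mulVec (lam a) b / 2 := by
      simp only [hΛdef, Matrix.of_apply, Matrix.mulVec, dotProduct, Finset.mul_sum,
        Finset.sum_div]
      exact Finset.sum_congr rfl fun j _ => by ring
    have e2 : ∑ j, F a j * Λ b j = θ b * F.mulVec (lam b) a / 2 := by
      simp only [hΛdef, Matrix.of_apply, Matrix.mulVec, dotProduct, Finset.mul_sum,
        Finset.sum_div]
      exact Finset.sum_congr rfl fun j _ => by ring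
    have f1 : θ b * lam0 b * τ a = 2 * (τ a * Λ₀ b) := by simp only [hΛ₀def]; ring
    have f2 : θ a * lam0 a * τ b = 2 * (Λ₀ a * τ b) := by simp only [hΛ₀def]; ring
    rw [e1, e2]
    linarith
  · intro a
    have h := mul_le_mul_of_nonneg_left (hB a) (hθ a).le
    have hinv : θ a * (θ a)⁻¹ = 1 := mul_inv_cancel₀ (hθ a).ne'
    have g1 : Λ.mulVec w a = θ a * (w ⬝ᵥ lam a) / 2 := by
      simp only [hΛdef, Matrix.of_apply, Matrix.mulVec, dotProduct, Finset.mul_sum,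
        Finset.sum_div]
      exact Finset.sum_congr rfl fun j _ => by ring
    rw [g1]
    rw [mul_sub, mul_sub, ← mul_assoc, hinv, one_mul] at h
    have f : 2 * Λ₀ a = θ a * lam0 a := by simp only [hΛ₀def]; ring
    linarith
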